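/- Let p be a prime and let n, k be integers with n ≥ pk and k ≥ 2. For a vertex A = (A_1, ..., A_{p−1}) of the generalized Kneser graph KN(n, k, p−1), define x_A ∈ (ℤ/pℤ)^n by x_A = 1·𝟙_{A_1} + 2·𝟙_{A_2} + ... + (p−1)·𝟙_{A_{p−1}}. If A and B are adjacent vertices of KN(n, k, p−1), then min( d(x_A − x_B, 𝟏), d(x_B − x_A, 𝟏) ) ≤ pn − p²k, where d denotes Hamming distance in (ℤ/pℤ)^n and 𝟏 is the all-ones vector. In particular, the map A ↦ x_A is an injective graph homomorphism from KN(n, k, p−1) into Cay((ℤ/pℤ)^n, S) where S = { x : d(x, 𝟏) ≤ pn − p²k }. -/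

import Mathlib

/-- The Cayley graph `Cay(Γ, A)`: distinct `u, v` are adjacent iff
`v - u ∈ A` or `u - v ∈ A`. -/
def cayley {G : Type*} [AddCommGroup G] (A : Set G) : SimpleGraph G where
  Adj u v := u ≠ v ∧ (v - u ∈ A ∨ u - v ∈ A)
  symm := ⟨fun _ _ h => ⟨h.1.symm, h.2.symm⟩⟩
  loopless := ⟨fun _ h => h.1 rfl⟩

/-- Vertices of the generalized Kneser graph `KN(n, k, m)`: `m`-tuples of pairwise
disjoint `k`-element subsets of `{1, ..., n}`. -/
def KNVert (n k m : ℕ) : Type :=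
  {A : Fin m → Finset (Fin n) //
    (∀ i, (A i).card = k) ∧ ∀ i j, i ≠ j → Disjoint (A i) (A j)}

/-- Condition (A1): every cumulative prefix of `A` is disjoint from the
complementary suffix of `B`. -/
def CondA1 {n m : ℕ} (A B : Fin m → Finset (Fin n)) : Prop :=
  ∀ i : Fin m, Disjoint ((Finset.Iic i).biUnion A) ((Finset.Ici i).biUnion B)

/-- The generalized Kneser graph `KN(n, k, m)`. -/
def KN (n k m : ℕ) : SimpleGraph (KNVert n k m) where
  Adj X Y := X ≠ Y ∧ (CondA1 X.1 Y.1 ∨ CondA1 Y.1 X.1)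
  symm := ⟨fun _ _ h => ⟨h.1.symm, h.2.symm⟩⟩
  loopless := ⟨fun _ h => h.1 rfl⟩

/-- The vector `x_A = 1·𝟙_{A_1} + 2·𝟙_{A_2} + ... + (p−1)·𝟙_{A_{p−1}} ∈ (ℤ/pℤ)^n`
associated to a vertex `A = (A_1, ..., A_{p−1})` of `KN(n, k, p−1)`. -/
def xVec (p n k : ℕ) (X : KNVert n k (p - 1)) : Fin n → ZMod p :=
  fun j => ∑ i : Fin (p - 1), if j ∈ X.1 i then (((i : ℕ) + 1 : ℕ) : ZMod p) else 0

/-- Natural-number value of the vector `x_A` at coordinate `j`. -/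
def valA (p n k : ℕ) (X : KNVert n k (p - 1)) (j : Fin n) : ℕ :=
  ∑ i : Fin (p - 1), if j ∈ X.1 i then (i : ℕ) + 1 else 0

lemma valA_eq_of_mem {p n k : ℕ} (X : KNVert n k (p - 1)) {j : Fin n} {i : Fin (p - 1)}
    (h : j ∈ X.1 i) : valA p n k X j = (i : ℕ) + 1 := by
  rw [valA, Finset.sum_eq_single i]
  · rw [if_pos h]
  · exact fun i' _ hne => if_neg fun h' => Finset.disjoint_left.mp (X.2.2 i' i hne) h' h
  · exact fun h' => absurd (Finset.mem_univ i) h'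

lemma valA_spec {p n k : ℕ} (X : KNVert n k (p - 1)) (j : Fin n) :
    (valA p n k X j = 0 ∧ ∀ i, j ∉ X.1 i) ∨
      ∃ i, j ∈ X.1 i ∧ valA p n k X j = (i : ℕ) + 1 := by
  by_cases h : ∃ i, j ∈ X.1 i
  · obtain ⟨i, hi⟩ := h
    exact Or.inr ⟨i, hi, valA_eq_of_mem X hi⟩
  · push_neg at h
    exact Or.inl ⟨Finset.sum_eq_zero fun i _ => if_neg (h i), h⟩

lemma valA_le {p n k : ℕ} (X : KNVert n k (p - 1)) (j : Fin n) :
    valA p n k X j ≤ p - 1 := by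
  rcases valA_spec X j with ⟨h, _⟩ | ⟨i, _, h⟩
  · omega
  · have := i.isLt; omega

lemma mem_iff_valA {p n k : ℕ} (X : KNVert n k (p - 1)) (j : Fin n) (i : Fin (p - 1)) :
    j ∈ X.1 i ↔ valA p n k X j = (i : ℕ) + 1 := by
  refine ⟨valA_eq_of_mem X, fun h => ?_⟩
  rcases valA_spec X j with ⟨h0, _⟩ | ⟨i', hi', h'⟩
  · omega
  · have : i' = i := Fin.ext (by omega)
    rwa [this] at hi'

lemma xVec_eq_cast {p n k : ℕ} (X : KNVert n k (p - 1)) (j : Fin n) :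
    xVec p n k X j = ((valA p n k X j : ℕ) : ZMod p) := by
  rw [xVec, valA]
  push_cast [apply_ite (Nat.cast : ℕ → ZMod p)]
  rfl

lemma xVec_inj {p n k : ℕ} (hp : p.Prime) : Function.Injective (xVec p n k) := by
  haveI : NeZero p := ⟨hp.ne_zero⟩
  intro X Y h
  have hval : ∀ j, valA p n k X j = valA p n k Y j := by
    intro j
    have h1 := congrFun h j
    rw [xVec_eq_cast, xVec_eq_cast] at h1
    have hx := ZMod.val_cast_of_lt
      (show valA p n k X j < p by have := valA_le X j; have := hp.two_le; omega)
    have hy := ZMod.val_cast_of_lt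
      (show valA p n k Y j < p by have := valA_le Y j; have := hp.two_le; omega)
    rw [← hx, ← hy, h1]
  refine Subtype.ext (funext fun i => ?_)
  ext j
  rw [mem_iff_valA, mem_iff_valA, hval j]

lemma condA1_lt {p n k : ℕ} {X Y : KNVert n k (p - 1)} (h : CondA1 X.1 Y.1)
    {j : Fin n} {i i' : Fin (p - 1)} (hx : j ∈ X.1 i) (hy : j ∈ Y.1 i') : i' < i := by
  by_contra hle
  push_neg at hle
  exact Finset.disjoint_left.mp (h i)
    (Finset.mem_biUnion.mpr ⟨i, Finset.mem_Iic.mpr le_rfl, hx⟩)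
    (Finset.mem_biUnion.mpr ⟨i', Finset.mem_Ici.mpr hle, hy⟩)

lemma valA_sum {p n k : ℕ} (X : KNVert n k (p - 1)) :
    ∑ j, valA p n k X j = ∑ i : Fin (p - 1), k * ((i : ℕ) + 1) := by
  simp only [valA]
  rw [Finset.sum_comm]
  refine Finset.sum_congr rfl fun i _ => ?_
  rw [Finset.sum_ite_mem, Finset.univ_inter, Finset.sum_const, X.2.1 i, smul_eq_mul]

lemma valA_zero_card {p n k : ℕ} (X : KNVert n k (p - 1)) :
    (Finset.univ.filter fun j => valA p n k X j = 0).card + (p - 1) * k = n := by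
  have hne : (Finset.univ.filter fun j => ¬ valA p n k X j = 0) = Finset.univ.biUnion X.1 := by
    ext j
    simp only [Finset.mem_filter, Finset.mem_univ, true_and, Finset.mem_biUnion]
    constructor
    · intro hj
      rcases valA_spec X j with ⟨h0, _⟩ | ⟨i, hi, _⟩
      · exact absurd h0 hj
      · exact ⟨i, hi⟩
    · rintro ⟨i, hi⟩
      rw [valA_eq_of_mem X hi]
      omega
  have hcard : (Finset.univ.biUnion X.1).card = (p - 1) * k := by
    rw [Finset.card_biUnion (fun i _ i' _ hne => X.2.2 i i' hne)]
    calc ∑ i, (X.1 i).card = ∑ _i : Fin (p - 1), k := Finset.sum_congr rfl fun i _ => X.2.1 i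
      _ = (p - 1) * k := by simp [Finset.sum_const, mul_comm]
  have htot := Finset.card_filter_add_card_filter_not
    (s := (Finset.univ : Finset (Fin n))) (p := fun j => valA p n k X j = 0)
  rw [Finset.card_univ, Fintype.card_fin] at htot
  rw [hne, hcard] at htot
  omega

lemma arith_aux (p n k Z S d : ℕ) (hp : 1 ≤ p) (hn : p * k ≤ n) (h1 : S + n = p * Z)
    (h2 : Z + (p - 1) * k = n) (hd : d ≤ S) : d ≤ p * n - p ^ 2 * k := by
  obtain ⟨q, rfl⟩ : ∃ q, p = q + 1 := ⟨p - 1, by omega⟩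
  simp only [Nat.add_sub_cancel] at h2
  have h3 : (q + 1) * Z + (q + 1) * (q * k) = (q + 1) * n := by rw [← Nat.mul_add, h2]
  have hkey : d + (q + 1) ^ 2 * k ≤ (q + 1) * n := by nlinarith
  exact Nat.le_sub_of_add_le hkey

lemma dist_le {p n k : ℕ} (hp : p.Prime) (hn : p * k ≤ n) {X Y : KNVert n k (p - 1)}
    (h : CondA1 X.1 Y.1) :
    hammingDist (xVec p n k X - xVec p n k Y) (1 : Fin n → ZMod p) ≤ p * n - p ^ 2 * k := by
  have hp2 := hp.two_le
  have hcon : ∀ j, valA p n k X j = 0 ∨ valA p n k Y j = 0 ∨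
      valA p n k Y j < valA p n k X j := by
    intro j
    rcases valA_spec X j with ⟨h0, _⟩ | ⟨i, hi, hXv⟩
    · exact Or.inl h0
    rcases valA_spec Y j with ⟨h0, _⟩ | ⟨i', hi', hYv⟩
    · exact Or.inr (Or.inl h0)
    · have hlt : (i' : ℕ) < (i : ℕ) := Fin.lt_def.mp (condA1_lt h hi hi')
      right; right
      omega
  set A' : Fin n → ℕ := fun j => if valA p n k X j = 0 then p - 1 else valA p n k X j - 1
    with hA'
  have hble : ∀ j, valA p n k Y j ≤ A' j := by
    intro j
    have h1 := valA_le Y j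
    rcases hcon j with h2 | h2 | h2 <;> simp only [hA'] <;> split_ifs <;> omega
  have hc1 : ∀ j, xVec p n k X j - xVec p n k Y j ≠ 1 → 1 ≤ A' j - valA p n k Y j := by
    intro j hne
    rcases Nat.eq_zero_or_pos (A' j - valA p n k Y j) with h0 | h0
    · exfalso
      have hAb : A' j = valA p n k Y j := by have := hble j; omega
      apply hne
      by_cases haz : valA p n k X j = 0
      · have hbv : valA p n k Y j = p - 1 := by rw [← hAb]; simp [hA', haz]
        rw [xVec_eq_cast, xVec_eq_cast, haz, hbv]
        have h1p : (1 : ℕ) ≤ p := by omega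
        push_cast [Nat.cast_sub h1p, ZMod.natCast_self]
        ring
      · have hav : valA p n k X j = valA p n k Y j + 1 := by
          have hA : A' j = valA p n k X j - 1 := by simp [hA', haz]
          omega
        rw [xVec_eq_cast, xVec_eq_cast, hav]
        push_cast
        ring
    · exact h0
  set Z := (Finset.univ.filter fun j => valA p n k X j = 0).card with hZ
  have hS : (∑ j, (A' j - valA p n k Y j)) + n = p * Z := by
    have e1 : ∑ j, (A' j + 1) = (∑ j, A' j) + n := by
      rw [Finset.sum_add_distrib, Finset.sum_const, Finset.card_univ, Fintype.card_fin,
        smul_eq_mul, mul_one]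
    have e2 : ∑ j, (A' j + 1) = (∑ j, valA p n k X j) + p * Z := by
      calc ∑ j, (A' j + 1)
          = ∑ j, (valA p n k X j + p * (if valA p n k X j = 0 then 1 else 0)) := by
            refine Finset.sum_congr rfl fun j _ => ?_
            simp only [hA']
            split_ifs <;> omega
        _ = (∑ j, valA p n k X j) + p * ∑ j, (if valA p n k X j = 0 then 1 else 0) := by
            rw [Finset.sum_add_distrib, Finset.mul_sum]
        _ = (∑ j, valA p n k X j) + p * Z := by rw [hZ, Finset.card_filter]
    have e3 : (∑ j, (A' j - valA p n k Y j)) + ∑ j, valA p n k Y j = ∑ j, A' j := by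
      rw [← Finset.sum_add_distrib]
      exact Finset.sum_congr rfl fun j _ => Nat.sub_add_cancel (hble j)
    have e4 : ∑ j, valA p n k X j = ∑ j, valA p n k Y j := by
      rw [valA_sum, valA_sum]
    omega
  have hZn : Z + (p - 1) * k = n := valA_zero_card X
  have hbad : hammingDist (xVec p n k X - xVec p n k Y) (1 : Fin n → ZMod p) ≤
      ∑ j, (A' j - valA p n k Y j) := by
    unfold hammingDist
    calc (Finset.univ.filter fun j =>
            (xVec p n k X - xVec p n k Y) j ≠ (1 : Fin n → ZMod p) j).card
        = ∑ j ∈ Finset.univ.filter fun j =>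
            (xVec p n k X - xVec p n k Y) j ≠ (1 : Fin n → ZMod p) j, 1 :=
          Finset.card_eq_sum_ones _
      _ ≤ ∑ j ∈ Finset.univ.filter fun j =>
            (xVec p n k X - xVec p n k Y) j ≠ (1 : Fin n → ZMod p) j,
            (A' j - valA p n k Y j) := by
          refine Finset.sum_le_sum fun j hj => ?_
          have := (Finset.mem_filter.mp hj).2
          simp only [Pi.sub_apply, Pi.one_apply] at this
          exact hc1 j this
      _ ≤ ∑ j, (A' j - valA p n k Y j) :=
          Finset.sum_le_sum_of_subset (Finset.filter_subset _ _)
  exact arith_aux p n k Z _ _ (by omega) hn hS hZn hbad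

theorem statement16 (p n k : ℕ) (hp : p.Prime) (hk : 2 ≤ k) (hn : p * k ≤ n) :
    (∀ X Y : KNVert n k (p - 1), (KN n k (p - 1)).Adj X Y →
      min (hammingDist (xVec p n k X - xVec p n k Y) (1 : Fin n → ZMod p))
          (hammingDist (xVec p n k Y - xVec p n k X) (1 : Fin n → ZMod p)) ≤
        p * n - p ^ 2 * k) ∧
    Function.Injective (xVec p n k) ∧
    (∀ X Y : KNVert n k (p - 1), (KN n k (p - 1)).Adj X Y →
      (cayley {x : Fin n → ZMod p |
        hammingDist x (1 : Fin n → ZMod p) ≤ p * n - p ^ 2 * k}).Adj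
          (xVec p n k X) (xVec p n k Y)) := by
  refine ⟨?_, xVec_inj hp, ?_⟩
  · intro X Y hAdj
    rcases hAdj.2 with h | h
    · exact le_trans (min_le_left _ _) (dist_le hp hn h)
    · exact le_trans (min_le_right _ _) (dist_le hp hn h)
  · intro X Y hAdj
    refine ⟨fun hEq => hAdj.1 (xVec_inj hp hEq), ?_⟩
    rcases hAdj.2 with h | h
    · exact Or.inr (dist_le hp hn h)
    · exact Or.inl (dist_le hp hn h)
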